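/- Let σ_x, σ_y, σ_z be the Pauli matrices and define for t ≥ 0 the linear map Λ_t on M_2(ℂ) by Λ_t(I) = I, Λ_t(σ_x) = e^{−t} cosh(t) σ_x, Λ_t(σ_y) = e^{−t} cosh(t) σ_y, Λ_t(σ_z) = e^{−2t} σ_z (extended by complex linearity). Then: (i) Λ_t solves dΛ_t/dt = L_t ∘ Λ_t with Λ_0 = id, where L_t(ρ) = ½(σ_x ρ σ_x − ρ) + ½(σ_y ρ σ_y − ρ) − ½ tanh(t)(σ_z ρ σ_z − ρ); (ii) for every t ≥ 0 the map Λ_t is completely positive (its Choi matrix is positive semidefinite) and trace preserving; and (iii) for every t > 0, ∫_0^t (−½ tanh(τ)) dτ = −½ log(cosh t) < 0, so the z-dissipation rate has strictly negative integral at all positive times. -/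

import Mathlib

open Matrix Kronecker
open scoped ComplexOrder

attribute [local instance] Matrix.normedAddCommGroup Matrix.normedSpace

noncomputable def sigmaX : Matrix (Fin 2) (Fin 2) ℂ := !![0, 1; 1, 0]
noncomputable def sigmaY : Matrix (Fin 2) (Fin 2) ℂ :=
  !![0, -Complex.I; Complex.I, 0]
noncomputable def sigmaZ : Matrix (Fin 2) (Fin 2) ℂ := !![1, 0; 0, -1]

/-- The Choi matrix of a linear map on `2 × 2` complex matrices. -/
noncomputable def choiMatrix2
    (Φ : Matrix (Fin 2) (Fin 2) ℂ →ₗ[ℂ] Matrix (Fin 2) (Fin 2) ℂ) :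
    Matrix (Fin 2 × Fin 2) (Fin 2 × Fin 2) ℂ :=
  ∑ k : Fin 2, ∑ l : Fin 2,
    (Φ (Matrix.single k l 1)) ⊗ₖ (Matrix.single k l (1 : ℂ))

set_option maxHeartbeats 2000000
set_option linter.unusedTactic false
set_option linter.unnecessarySeqFocus false

lemma pauli_decomp (ρ : Matrix (Fin 2) (Fin 2) ℂ) :
    ρ = ((ρ 0 0 + ρ 1 1)/2) • (1 : Matrix (Fin 2) (Fin 2) ℂ)
      + ((ρ 0 1 + ρ 1 0)/2) • sigmaX
      + (Complex.I * (ρ 0 1 - ρ 1 0)/2) • sigmaY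
      + ((ρ 0 0 - ρ 1 1)/2) • sigmaZ := by
  ext i j
  fin_cases i <;> fin_cases j <;>
    simp [sigmaX, sigmaY, sigmaZ, Matrix.one_apply] <;> ring_nf <;>
    simp [Complex.I_sq] <;> ring


/-- the index embedding -/
def eIdx : Fin 2 × Fin 2 → Fin 4 := fun p => ⟨2 * p.1.val + p.2.val, by omega⟩

noncomputable def M4 (t : ℝ) : Matrix (Fin 4) (Fin 4) ℂ :=
  !![(((1 + Real.exp (-2*t))/2 : ℝ) : ℂ), 0, 0, (((1 + Real.exp (-2*t))/2 : ℝ) : ℂ);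
     0, (((1 - Real.exp (-2*t))/2 : ℝ) : ℂ), 0, 0;
     0, 0, (((1 - Real.exp (-2*t))/2 : ℝ) : ℂ), 0;
     (((1 + Real.exp (-2*t))/2 : ℝ) : ℂ), 0, 0, (((1 + Real.exp (-2*t))/2 : ℝ) : ℂ)]

noncomputable def B4 (t : ℝ) : Matrix (Fin 4) (Fin 4) ℂ :=
  !![((Real.sqrt ((1 + Real.exp (-2*t))/2) : ℝ) : ℂ), 0, 0, ((Real.sqrt ((1 + Real.exp (-2*t))/2) : ℝ) : ℂ);
     0, ((Real.sqrt ((1 - Real.exp (-2*t))/2) : ℝ) : ℂ), 0, 0;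
     0, 0, ((Real.sqrt ((1 - Real.exp (-2*t))/2) : ℝ) : ℂ), 0;
     0, 0, 0, 0]

lemma M4_psd (t : ℝ) (ht : 0 ≤ t) : (M4 t).PosSemidef := by
  have ha : (0:ℝ) ≤ (1 + Real.exp (-2*t))/2 := by positivity
  have hc : (0:ℝ) ≤ (1 - Real.exp (-2*t))/2 := by
    have : Real.exp (-2*t) ≤ 1 := by
      rw [Real.exp_le_one_iff]; linarith
    linarith
  have ha2 : (0:ℝ) ≤ 1 + Real.exp (-(2*t)) := by positivity
  have hc2 : (0:ℝ) ≤ 1 - Real.exp (-(2*t)) := by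
    have : Real.exp (-(2*t)) ≤ 1 := by rw [Real.exp_le_one_iff]; linarith
    linarith
  have h2' : (0:ℝ) ≤ 2 := by norm_num
  have hM : M4 t = (B4 t)ᴴ * (B4 t) := by
    ext i j
    fin_cases i <;> fin_cases j <;>
      norm_num [M4, B4, Matrix.mul_apply, Fin.sum_univ_four, Complex.conj_ofReal,
        ← Complex.ofReal_mul, Real.mul_self_sqrt ha, Real.mul_self_sqrt hc,
        Matrix.vecHead, Matrix.vecTail, Matrix.cons_val_two, Matrix.cons_val_three] <;>
      (try (rw [div_mul_div_comm, ← Complex.ofReal_mul, ← Complex.ofReal_mul,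
          Real.mul_self_sqrt h2']
            <;> norm_num [Real.mul_self_sqrt ha2, Real.mul_self_sqrt hc2]))
  rw [hM]
  exact Matrix.posSemidef_conjTranspose_mul_self _


section keyfacts
variable {Λ : ℝ → Matrix (Fin 2) (Fin 2) ℂ →ₗ[ℂ] Matrix (Fin 2) (Fin 2) ℂ}
    (hid : ∀ t : ℝ, Λ t 1 = 1)
    (hx : ∀ t : ℝ, Λ t sigmaX = (Real.exp (-t) * Real.cosh t : ℝ) • sigmaX)
    (hy : ∀ t : ℝ, Λ t sigmaY = (Real.exp (-t) * Real.cosh t : ℝ) • sigmaY)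
    (hz : ∀ t : ℝ, Λ t sigmaZ = (Real.exp (-2 * t) : ℝ) • sigmaZ)

include hid hx hy hz in
lemma key (t : ℝ) (ρ : Matrix (Fin 2) (Fin 2) ℂ) :
    Λ t ρ = ((ρ 0 0 + ρ 1 1)/2) • (1 : Matrix (Fin 2) (Fin 2) ℂ)
      + (Real.exp (-t) * Real.cosh t) • (((ρ 0 1 + ρ 1 0)/2) • sigmaX)
      + (Real.exp (-t) * Real.cosh t) • ((Complex.I * (ρ 0 1 - ρ 1 0)/2) • sigmaY)
      + (Real.exp (-2 * t)) • (((ρ 0 0 - ρ 1 1)/2) • sigmaZ) := by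
  conv_lhs => rw [pauli_decomp ρ]
  simp only [map_add, _root_.map_smul, hid, hx, hy, hz]
  ext i j
  simp [Matrix.smul_apply, Complex.real_smul]
  ring




include hid hx hy hz in
lemma part_id : Λ 0 = LinearMap.id := by
  apply LinearMap.ext; intro ρ
  rw [key hid hx hy hz]
  simp only [neg_zero, Real.exp_zero, Real.cosh_zero, mul_zero, one_mul, one_smul,
    LinearMap.id_coe, id_eq]
  exact (pauli_decomp ρ).symm


lemma sq_x : sigmaX * sigmaX = 1 := by
  ext i j; fin_cases i <;> fin_cases j <;> simp [sigmaX, Matrix.mul_apply, Fin.sum_univ_two, Matrix.one_apply]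
lemma sq_y : sigmaY * sigmaY = 1 := by
  ext i j; fin_cases i <;> fin_cases j <;> simp [sigmaY, Matrix.mul_apply, Fin.sum_univ_two, Matrix.one_apply]
lemma sq_z : sigmaZ * sigmaZ = 1 := by
  ext i j; fin_cases i <;> fin_cases j <;> simp [sigmaZ, Matrix.mul_apply, Fin.sum_univ_two, Matrix.one_apply]
lemma xyx : sigmaX * sigmaY * sigmaX = -sigmaY := by
  ext i j; fin_cases i <;> fin_cases j <;> simp [sigmaX, sigmaY, Matrix.mul_apply, Fin.sum_univ_two]
lemma xzx : sigmaX * sigmaZ * sigmaX = -sigmaZ := by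
  ext i j; fin_cases i <;> fin_cases j <;> simp [sigmaX, sigmaZ, Matrix.mul_apply, Fin.sum_univ_two]
lemma yxy : sigmaY * sigmaX * sigmaY = -sigmaX := by
  ext i j; fin_cases i <;> fin_cases j <;> simp [sigmaX, sigmaY, Matrix.mul_apply, Fin.sum_univ_two]
lemma yzy : sigmaY * sigmaZ * sigmaY = -sigmaZ := by
  ext i j; fin_cases i <;> fin_cases j <;> simp [sigmaY, sigmaZ, Matrix.mul_apply, Fin.sum_univ_two]
lemma zxz : sigmaZ * sigmaX * sigmaZ = -sigmaX := by
  ext i j; fin_cases i <;> fin_cases j <;> simp [sigmaX, sigmaZ, Matrix.mul_apply, Fin.sum_univ_two]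
lemma zyz : sigmaZ * sigmaY * sigmaZ = -sigmaY := by
  ext i j; fin_cases i <;> fin_cases j <;> simp [sigmaY, sigmaZ, Matrix.mul_apply, Fin.sum_univ_two]


include hid hx hy hz in
lemma part_deriv (t : ℝ) (ρ : Matrix (Fin 2) (Fin 2) ℂ) :
    HasDerivAt (fun s => Λ s ρ)
      ((2:ℂ)⁻¹ • (sigmaX * Λ t ρ * sigmaX - Λ t ρ) +
        (2:ℂ)⁻¹ • (sigmaY * Λ t ρ * sigmaY - Λ t ρ) -
        ((Real.tanh t / 2 : ℝ) : ℂ) • (sigmaZ * Λ t ρ * sigmaZ - Λ t ρ)) t := by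
  have h1 : HasDerivAt (fun s : ℝ => Real.exp (-s)) (-Real.exp (-t)) t := by
    simpa using (hasDerivAt_neg t).exp
  have hf : HasDerivAt (fun s : ℝ => Real.exp (-s) * Real.cosh s)
      (-Real.exp (-t) * Real.cosh t + Real.exp (-t) * Real.sinh t) t :=
    h1.mul (Real.hasDerivAt_cosh t)
  have hg : HasDerivAt (fun s : ℝ => Real.exp (-2 * s)) (-2 * Real.exp (-2 * t)) t := by
    have h2 : HasDerivAt (fun s : ℝ => -2 * s) (-2) t := by
      simpa using (hasDerivAt_id t).const_mul (-2 : ℝ)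
    simpa [mul_comm] using h2.exp
  have hfun : (fun s => Λ s ρ) = fun s =>
      ((ρ 0 0 + ρ 1 1)/2) • (1 : Matrix (Fin 2) (Fin 2) ℂ)
      + (Real.exp (-s) * Real.cosh s) • (((ρ 0 1 + ρ 1 0)/2) • sigmaX)
      + (Real.exp (-s) * Real.cosh s) • ((Complex.I * (ρ 0 1 - ρ 1 0)/2) • sigmaY)
      + (Real.exp (-2 * s)) • (((ρ 0 0 - ρ 1 1)/2) • sigmaZ) := by
    funext s; exact key hid hx hy hz s ρ
  rw [hfun]
  have hD := (((hasDerivAt_const t (((ρ 0 0 + ρ 1 1)/2) • (1 : Matrix (Fin 2) (Fin 2) ℂ))).add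
      (hf.smul_const (((ρ 0 1 + ρ 1 0)/2) • sigmaX))).add
      (hf.smul_const ((Complex.I * (ρ 0 1 - ρ 1 0)/2) • sigmaY))).add
      (hg.smul_const (((ρ 0 0 - ρ 1 1)/2) • sigmaZ))
  refine hD.congr_deriv ?_
  rw [key hid hx hy hz t ρ]
  have hTC : (Real.tanh t : ℂ) * (Real.cosh t : ℂ) = (Real.sinh t : ℂ) := by
    have : Real.tanh t * Real.cosh t = Real.sinh t := by
      rw [Real.tanh_eq_sinh_div_cosh]; field_simp [(Real.cosh_pos t).ne']
    exact_mod_cast congrArg (Complex.ofReal) this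
  have hE2 : (Real.exp (-t) : ℂ) * (Real.exp (-t) : ℂ) = (Real.exp (-2 * t) : ℂ) := by
    have : Real.exp (-t) * Real.exp (-t) = Real.exp (-2 * t) := by
      rw [← Real.exp_add]; ring_nf
    exact_mod_cast congrArg (Complex.ofReal) this
  have hCS : (Real.cosh t : ℂ) - (Real.sinh t : ℂ) = (Real.exp (-t) : ℂ) := by
    exact_mod_cast congrArg (Complex.ofReal) (Real.cosh_sub_sinh t)
  simp only [Matrix.mul_add, Matrix.add_mul, Matrix.mul_smul, Matrix.smul_mul,
    Matrix.mul_one, Matrix.one_mul, sq_x, sq_y, sq_z, xyx, xzx, yxy, yzy, zxz, zyz,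
    mul_one, one_mul]
  rw [show Real.exp (-2*t) = Real.exp (-t) * Real.exp (-t) from by rw [← Real.exp_add]; ring_nf]
  rw [Real.tanh_eq_sinh_div_cosh]
  rw [show Real.sinh t = Real.cosh t - Real.exp (-t) from by
    rw [← Real.cosh_sub_sinh t]; ring]
  have hcne : Complex.cosh (t : ℂ) ≠ 0 := by
    rw [← Complex.ofReal_cosh]
    exact_mod_cast Complex.ofReal_ne_zero.mpr (Real.cosh_pos t).ne'
  match_scalars
  all_goals push_cast
  all_goals field_simp [hcne]
  all_goals push_cast [Complex.coe_algebraMap]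
  all_goals ring

include hid hx hy hz in
lemma part_trace (t : ℝ) (ρ : Matrix (Fin 2) (Fin 2) ℂ) : (Λ t ρ).trace = ρ.trace := by
  rw [key hid hx hy hz]
  simp [Matrix.trace, Fin.sum_univ_two, sigmaX, sigmaY, sigmaZ, Matrix.one_apply,
    Matrix.smul_apply, Matrix.add_apply, Complex.real_smul]
  ring


include hid hx hy hz in
lemma choi_eq (t : ℝ) : choiMatrix2 (Λ t) = (M4 t).submatrix eIdx eIdx := by
  have hac : Real.exp (-t) * Real.cosh t = (1 + Real.exp (-2*t))/2 := by
    have h1 : Real.exp (-t) * Real.exp t = 1 := by rw [← Real.exp_add]; simp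
    have h2 : Real.exp (-t) * Real.exp (-t) = Real.exp (-2*t) := by
      rw [← Real.exp_add]; ring_nf
    rw [Real.cosh_eq]
    linear_combination h1/2 + h2/2
  have hacC : Complex.exp (-(t:ℂ)) * Complex.cosh (t:ℂ) = (1 + Complex.exp (-((t:ℂ)*2))) / 2 := by
    have := congrArg (Complex.ofReal) hac
    push_cast at this
    convert this using 3 <;> ring
  ext ⟨i, k⟩ ⟨j, l⟩
  simp only [choiMatrix2, Fin.sum_univ_two, Matrix.add_apply, Matrix.kroneckerMap_apply]
  rw [key hid hx hy hz, key hid hx hy hz, key hid hx hy hz, key hid hx hy hz]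
  fin_cases i <;> fin_cases k <;> fin_cases j <;> fin_cases l <;>
    simp [Matrix.single, M4, eIdx, sigmaX, sigmaY, sigmaZ, Matrix.one_apply,
      Matrix.smul_apply, Matrix.add_apply, Complex.real_smul, Matrix.submatrix_apply,
      Matrix.vecHead, Matrix.vecTail]
  all_goals push_cast
  any_goals ring
  all_goals simp only [Complex.I_sq]
  any_goals ring
  all_goals linear_combination hacC

include hid hx hy hz in
lemma part_choi (t : ℝ) (ht : 0 ≤ t) : (choiMatrix2 (Λ t)).PosSemidef := by
  rw [choi_eq hid hx hy hz]
  exact (M4_psd t ht).submatrix eIdx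

end keyfacts

lemma integral_part (t : ℝ) (ht : 0 < t) :
    (∫ τ in (0:ℝ)..t, (-(Real.tanh τ) / 2)) = -(Real.log (Real.cosh t)) / 2 ∧
      -(Real.log (Real.cosh t)) / 2 < 0 := by
  constructor
  · have hderiv : ∀ x ∈ Set.uIcc (0:ℝ) t,
        HasDerivAt (fun y => -(Real.log (Real.cosh y)) / 2) (-(Real.tanh x) / 2) x := by
      intro x _
      have h1 : HasDerivAt Real.cosh (Real.sinh x) x := Real.hasDerivAt_cosh x
      have h2 : HasDerivAt (fun y => Real.log (Real.cosh y))
          (Real.sinh x / Real.cosh x) x := h1.log (Real.cosh_pos x).ne'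
      have h3 := (h2.neg).div_const 2
      simpa [Real.tanh_eq_sinh_div_cosh, neg_div] using h3
    have hint : IntervalIntegrable (fun τ => -(Real.tanh τ) / 2) MeasureTheory.volume 0 t :=
      by
      have hcont : Continuous Real.tanh := by
        have : Real.tanh = fun x => Real.sinh x / Real.cosh x :=
          funext fun x => Real.tanh_eq_sinh_div_cosh x
        rw [this]
        exact Real.continuous_sinh.div Real.continuous_cosh fun x => (Real.cosh_pos x).ne'
      exact ((hcont.neg).div_const 2).intervalIntegrable 0 t
    have := intervalIntegral.integral_eq_sub_of_hasDerivAt hderiv hint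
    simpa [Real.cosh_zero] using this
  · have h1 : 1 < Real.cosh t := by
      rw [Real.one_lt_cosh]; exact ht.ne'
    have := Real.log_pos h1
    linarith


theorem stmt_15
    (Λ : ℝ → Matrix (Fin 2) (Fin 2) ℂ →ₗ[ℂ] Matrix (Fin 2) (Fin 2) ℂ)
    (hid : ∀ t : ℝ, Λ t 1 = 1)
    (hx : ∀ t : ℝ, Λ t sigmaX = (Real.exp (-t) * Real.cosh t : ℝ) • sigmaX)
    (hy : ∀ t : ℝ, Λ t sigmaY = (Real.exp (-t) * Real.cosh t : ℝ) • sigmaY)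
    (hz : ∀ t : ℝ, Λ t sigmaZ = (Real.exp (-2 * t) : ℝ) • sigmaZ) :
    (Λ 0 = LinearMap.id ∧
      ∀ t : ℝ, 0 ≤ t → ∀ ρ : Matrix (Fin 2) (Fin 2) ℂ,
        HasDerivAt (fun s => Λ s ρ)
          ((2:ℂ)⁻¹ • (sigmaX * Λ t ρ * sigmaX - Λ t ρ) +
            (2:ℂ)⁻¹ • (sigmaY * Λ t ρ * sigmaY - Λ t ρ) -
            ((Real.tanh t / 2 : ℝ) : ℂ) • (sigmaZ * Λ t ρ * sigmaZ - Λ t ρ)) t) ∧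
    (∀ t : ℝ, 0 ≤ t → (choiMatrix2 (Λ t)).PosSemidef ∧
      ∀ ρ : Matrix (Fin 2) (Fin 2) ℂ, (Λ t ρ).trace = ρ.trace) ∧
    (∀ t : ℝ, 0 < t →
      (∫ τ in (0:ℝ)..t, (-(Real.tanh τ) / 2)) = -(Real.log (Real.cosh t)) / 2 ∧
      -(Real.log (Real.cosh t)) / 2 < 0) :=
  ⟨⟨part_id hid hx hy hz, fun t _ ρ => part_deriv hid hx hy hz t ρ⟩,
    fun t ht => ⟨part_choi hid hx hy hz t ht, fun ρ => part_trace hid hx hy hz t ρ⟩,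
    fun t ht => integral_part t ht⟩
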